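/- Let T be a bounded linear operator on L^∞(𝕋; ℝ) that maps even functions to even functions, with operator norm D := ‖T‖ < 1. Let F, N ∈ L^∞(𝕋; ℝ) be even, set δ := ‖F‖_{L^∞} and n := ‖N‖_{L^∞}, and assume n > 0 and δ < (1 − D)²/(4n). Define ε := (1 − D − √((1 − D)² − 4δn))/(2n), X_ε := {v ∈ L^∞(𝕋) : v(x) = v(−x) a.e., ‖v‖_{L^∞} ≤ ε}, and G[v] := (I − T)^{-1}(−F − N·v²). Then: (1) G(X_ε) ⊆ X_ε; and (2) ‖G[v] − G[w]‖_{L^∞} ≤ k·‖v − w‖_{L^∞} for all v, w ∈ X_ε, where k := 2nε/(1 − D) < 1. -/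

import Mathlib

open MeasureTheory

instance : Fact (0 < 2 * Real.pi) := ⟨by positivity⟩

/-- `ε = (1 - D - √((1-D)² - 4δn))/(2n)`. -/
noncomputable def fixedPointEps (D δ n : ℝ) : ℝ :=
  (1 - D - Real.sqrt ((1 - D) ^ 2 - 4 * δ * n)) / (2 * n)

open Filter Topology
open scoped ENNReal NNReal

namespace FixedPointAux

noncomputable abbrev ELp := Lp ℝ ⊤ (volume : Measure (AddCircle (2 * Real.pi)))

lemma aeNeg {P : AddCircle (2 * Real.pi) → Prop}
    (h : ∀ᵐ x : AddCircle (2 * Real.pi), P x) : ∀ᵐ x : AddCircle (2 * Real.pi), P (-x) :=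
  (Measure.measurePreserving_neg
    (volume : Measure (AddCircle (2 * Real.pi)))).quasiMeasurePreserving.tendsto_ae.eventually h

lemma ae_bd (f : ELp) : ∀ᵐ x : AddCircle (2 * Real.pi), ‖f x‖ ≤ ‖f‖ := by
  have h := ae_le_eLpNormEssSup (f := ⇑f) (μ := (volume : Measure (AddCircle (2 * Real.pi))))
  filter_upwards [h] with x hx
  have hne : eLpNormEssSup ⇑f (volume : Measure (AddCircle (2 * Real.pi))) ≠ ⊤ := by
    rw [← eLpNorm_exponent_top]; exact (Lp.eLpNorm_lt_top f).ne
  calc ‖f x‖ = ((‖f x‖₊ : ℝ≥0∞)).toReal := by simp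
    _ ≤ (eLpNormEssSup ⇑f _).toReal := ENNReal.toReal_mono hne hx
    _ = ‖f‖ := by rw [Lp.norm_def, eLpNorm_exponent_top]

lemma linf_norm_le (f : ELp) {C : ℝ} (hC : 0 ≤ C)
    (h : ∀ᵐ x : AddCircle (2 * Real.pi), ‖f x‖ ≤ C) : ‖f‖ ≤ C := by
  have := Lp.norm_le_of_ae_bound hC h
  simpa using this

end FixedPointAux

open FixedPointAux

set_option maxHeartbeats 1600000

/-- The fixed-point proposition: if `T` is a bounded operator on `L^∞(𝕋)` preserving even
functions with `D = ‖T‖ < 1`, `F, N ∈ L^∞(𝕋)` are even with `δ = ‖F‖`, `n = ‖N‖ > 0` and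
`δ < (1-D)²/(4n)`, then `G[v] = (I-T)⁻¹(-F - N v²)` (characterized by the defining equation
`(I - T)(G[v]) = -F - N v²` a.e.) maps `X_ε` into itself and is a `k`-contraction on `X_ε`
with `k = 2nε/(1-D) < 1`. -/
theorem fixedPoint_selfmap_and_contraction
    (T : Lp ℝ ⊤ (volume : Measure (AddCircle (2 * Real.pi))) →L[ℝ]
         Lp ℝ ⊤ (volume : Measure (AddCircle (2 * Real.pi))))
    (hD : ‖T‖ < 1)
    (hTeven : ∀ v : Lp ℝ ⊤ (volume : Measure (AddCircle (2 * Real.pi))),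
      (∀ᵐ x : AddCircle (2 * Real.pi), v (-x) = v x) →
      (∀ᵐ x : AddCircle (2 * Real.pi), T v (-x) = T v x))
    (F N : Lp ℝ ⊤ (volume : Measure (AddCircle (2 * Real.pi))))
    (hFeven : ∀ᵐ x : AddCircle (2 * Real.pi), F (-x) = F x)
    (hNeven : ∀ᵐ x : AddCircle (2 * Real.pi), N (-x) = N x)
    (hn : 0 < ‖N‖)
    (hδ : ‖F‖ < (1 - ‖T‖) ^ 2 / (4 * ‖N‖)) :
    (∀ v : Lp ℝ ⊤ (volume : Measure (AddCircle (2 * Real.pi))),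
      (∀ᵐ x : AddCircle (2 * Real.pi), v (-x) = v x) →
      ‖v‖ ≤ fixedPointEps ‖T‖ ‖F‖ ‖N‖ →
      (∃ g : Lp ℝ ⊤ (volume : Measure (AddCircle (2 * Real.pi))),
        ⇑(g - T g) =ᵐ[volume] fun x => -F x - N x * v x ^ 2) ∧
      ∀ g : Lp ℝ ⊤ (volume : Measure (AddCircle (2 * Real.pi))),
        (⇑(g - T g) =ᵐ[volume] fun x => -F x - N x * v x ^ 2) →
        ((∀ᵐ x : AddCircle (2 * Real.pi), g (-x) = g x) ∧
          ‖g‖ ≤ fixedPointEps ‖T‖ ‖F‖ ‖N‖)) ∧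
    2 * ‖N‖ * fixedPointEps ‖T‖ ‖F‖ ‖N‖ / (1 - ‖T‖) < 1 ∧
    (∀ v w gv gw : Lp ℝ ⊤ (volume : Measure (AddCircle (2 * Real.pi))),
      (∀ᵐ x : AddCircle (2 * Real.pi), v (-x) = v x) →
      ‖v‖ ≤ fixedPointEps ‖T‖ ‖F‖ ‖N‖ →
      (∀ᵐ x : AddCircle (2 * Real.pi), w (-x) = w x) →
      ‖w‖ ≤ fixedPointEps ‖T‖ ‖F‖ ‖N‖ →
      (⇑(gv - T gv) =ᵐ[volume] fun x => -F x - N x * v x ^ 2) →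
      (⇑(gw - T gw) =ᵐ[volume] fun x => -F x - N x * w x ^ 2) →
      ‖gv - gw‖ ≤ 2 * ‖N‖ * fixedPointEps ‖T‖ ‖F‖ ‖N‖ / (1 - ‖T‖) * ‖v - w‖) := by
  classical
  set ε := fixedPointEps ‖T‖ ‖F‖ ‖N‖ with hεdef
  set s := Real.sqrt ((1 - ‖T‖) ^ 2 - 4 * ‖F‖ * ‖N‖) with hsdef
  have hD1 : 0 < 1 - ‖T‖ := by linarith
  have hδ0 : 0 ≤ ‖F‖ := norm_nonneg F
  have hdisc : 0 < (1 - ‖T‖) ^ 2 - 4 * ‖F‖ * ‖N‖ := by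
    have h4n : (0:ℝ) < 4 * ‖N‖ := by positivity
    nlinarith [(lt_div_iff₀ h4n).mp hδ]
  have hs2 : s ^ 2 = (1 - ‖T‖) ^ 2 - 4 * ‖F‖ * ‖N‖ := Real.sq_sqrt hdisc.le
  have hs0 : 0 < s := Real.sqrt_pos.mpr hdisc
  have hsle : s ≤ 1 - ‖T‖ := by
    have h := Real.sqrt_le_sqrt
      (show (1 - ‖T‖) ^ 2 - 4 * ‖F‖ * ‖N‖ ≤ (1 - ‖T‖) ^ 2 by nlinarith)
    rwa [Real.sqrt_sq hD1.le] at h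
  have hεeq : 2 * ‖N‖ * ε = 1 - ‖T‖ - s := by
    rw [hεdef, fixedPointEps, ← hsdef]
    field_simp
  have hε0 : 0 ≤ ε := by nlinarith [hεeq]
  have hkey : ‖N‖ * ε ^ 2 + ‖F‖ = (1 - ‖T‖) * ε := by nlinarith [hεeq, hs2]
  -- solving `(I - T) g = h`
  have hsolve : ∀ h : ELp, ∃ g : ELp, g - T g = h := by
    intro h
    refine ⟨(↑(Units.oneSub T hD)⁻¹ : ELp →L[ℝ] ELp) h, ?_⟩
    have h1 : ((Units.oneSub T hD : (ELp →L[ℝ] ELp)ˣ) : ELp →L[ℝ] ELp) *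
        ↑(Units.oneSub T hD)⁻¹ = 1 := Units.mul_inv _
    have h2 := congrArg (fun S : ELp →L[ℝ] ELp => S h) h1
    simpa [Units.val_oneSub, ContinuousLinearMap.mul_apply,
      ContinuousLinearMap.sub_apply] using h2
  -- a priori bound
  have hbound : ∀ g h : ELp, g - T g = h → (1 - ‖T‖) * ‖g‖ ≤ ‖h‖ := by
    intro g h hgh
    have h1 : ‖g‖ ≤ ‖h‖ + ‖T g‖ := by
      have h2 : g = h + T g := by rw [← hgh]; abel
      calc ‖g‖ = ‖h + T g‖ := by rw [← h2]
        _ ≤ ‖h‖ + ‖T g‖ := norm_add_le _ _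
    have h2 : ‖T g‖ ≤ ‖T‖ * ‖g‖ := T.le_opNorm g
    nlinarith
  -- evenness propagates to the solution
  have heven : ∀ g h : ELp, g - T g = h →
      (∀ᵐ x : AddCircle (2 * Real.pi), h (-x) = h x) →
      ∀ᵐ x : AddCircle (2 * Real.pi), g (-x) = g x := by
    intro g h hgh hh
    have hrec : ∀ k : ℕ, ∃ e : ELp,
        (∀ᵐ x : AddCircle (2 * Real.pi), e (-x) = e x) ∧ ‖g - e‖ ≤ ‖T‖ ^ k * ‖g‖ := by
      intro k
      induction k with
      | zero =>
        refine ⟨0, ?_, by simp⟩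
        filter_upwards [aeNeg (Lp.coeFn_zero ℝ ⊤ _), Lp.coeFn_zero ℝ ⊤ _] with x h1 h2
        simp only [Pi.zero_apply] at h1 h2
        rw [h1, h2]
      | succ k ih =>
        obtain ⟨e, he, hne⟩ := ih
        refine ⟨T e + h, ?_, ?_⟩
        · have hTe := hTeven e he
          filter_upwards [aeNeg (Lp.coeFn_add (T e) h), Lp.coeFn_add (T e) h, hTe, hh]
            with x h1 h2 h3 h4
          simp only [Pi.add_apply] at h1 h2
          rw [h1, h2, h3, h4]
        · have h5 : g - (T e + h) = T (g - e) := by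
            have hg : g = h + T g := by rw [← hgh]; abel
            rw [map_sub]
            nth_rewrite 1 [hg]
            abel
          rw [h5]
          calc ‖T (g - e)‖ ≤ ‖T‖ * ‖g - e‖ := T.le_opNorm _
            _ ≤ ‖T‖ * (‖T‖ ^ k * ‖g‖) := mul_le_mul_of_nonneg_left hne (norm_nonneg T)
            _ = ‖T‖ ^ (k + 1) * ‖g‖ := by ring
    choose e hee hen using hrec
    have hae : ∀ᵐ x : AddCircle (2 * Real.pi), ∀ k : ℕ,
        |g x - e k x| ≤ ‖T‖ ^ k * ‖g‖ ∧ |g (-x) - e k (-x)| ≤ ‖T‖ ^ k * ‖g‖ ∧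
          e k (-x) = e k x := by
      rw [ae_all_iff]
      intro k
      have hb := ae_bd (g - e k)
      have hsub := Lp.coeFn_sub g (e k)
      filter_upwards [hb, hsub, aeNeg hb, aeNeg hsub, hee k] with x h1 h2 h3 h4 h5
      simp only [Pi.sub_apply] at h2 h4
      rw [h2] at h1
      rw [h4] at h3
      rw [Real.norm_eq_abs] at h1 h3
      exact ⟨h1.trans (hen k), h3.trans (hen k), h5⟩
    filter_upwards [hae] with x hx
    have hlim : Tendsto (fun k : ℕ => 2 * (‖T‖ ^ k * ‖g‖)) atTop (nhds 0) := by
      have h1 := tendsto_pow_atTop_nhds_zero_of_lt_one (norm_nonneg T) hD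
      have h2 := (h1.mul_const ‖g‖).const_mul 2
      simpa using h2
    have habs : |g (-x) - g x| ≤ 0 := by
      refine ge_of_tendsto hlim (Eventually.of_forall fun k => ?_)
      obtain ⟨h1, h2, h3⟩ := hx k
      have h4 : g (-x) - g x = (g (-x) - e k (-x)) + (e k x - g x) := by rw [h3]; ring
      calc |g (-x) - g x| ≤ |g (-x) - e k (-x)| + |e k x - g x| := by
            rw [h4]; exact abs_add_le _ _
        _ ≤ ‖T‖ ^ k * ‖g‖ + ‖T‖ ^ k * ‖g‖ := by
            rw [abs_sub_comm (e k x) (g x)]; exact add_le_add h2 h1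
        _ = 2 * (‖T‖ ^ k * ‖g‖) := by ring
    have := abs_nonpos_iff.mp habs
    linarith [sub_eq_zero.mp this]
  -- building the right-hand side as an element of `L^∞`
  have hmk : ∀ v : ELp, ∃ h : ELp,
      (⇑h =ᵐ[volume] fun x => -F x - N x * v x ^ 2) ∧ ‖h‖ ≤ ‖F‖ + ‖N‖ * ‖v‖ ^ 2 := by
    intro v
    have hb : ∀ᵐ x : AddCircle (2 * Real.pi),
        ‖-F x - N x * v x ^ 2‖ ≤ ‖F‖ + ‖N‖ * ‖v‖ ^ 2 := by
      filter_upwards [ae_bd F, ae_bd N, ae_bd v] with x h1 h2 h3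
      rw [Real.norm_eq_abs] at h1 h2 h3 ⊢
      have e1 : |(-F x - N x * v x ^ 2)| ≤ |F x| + |N x| * |v x| ^ 2 := by
        calc |(-F x - N x * v x ^ 2)| ≤ |(-F x)| + |N x * v x ^ 2| := abs_sub _ _
          _ = |F x| + |N x| * |v x| ^ 2 := by rw [abs_neg, abs_mul, abs_pow]
      have e2 : |N x| * |v x| ^ 2 ≤ ‖N‖ * ‖v‖ ^ 2 := by
        have := pow_le_pow_left₀ (abs_nonneg (v x)) h3 2
        exact mul_le_mul h2 this (by positivity) (norm_nonneg N)
      linarith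
    have hmeas : AEStronglyMeasurable (fun x => -F x - N x * v x ^ 2) volume :=
      (Lp.aestronglyMeasurable F).neg.sub
        ((Lp.aestronglyMeasurable N).mul ((Lp.aestronglyMeasurable v).pow 2))
    have hmem : MemLp (fun x => -F x - N x * v x ^ 2) ⊤ volume :=
      memLp_top_of_bound hmeas _ hb
    refine ⟨hmem.toLp _, hmem.coeFn_toLp, ?_⟩
    refine linf_norm_le _ (by positivity) ?_
    filter_upwards [hmem.coeFn_toLp, hb] with x h1 h2
    rw [h1]; exact h2
  refine ⟨?_, ?_, ?_⟩
  · -- self-map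
    intro v hveven hvnorm
    obtain ⟨h, hcoe, hnorm⟩ := hmk v
    have hφeven : ∀ᵐ x : AddCircle (2 * Real.pi),
        (fun x => -F x - N x * v x ^ 2) (-x) = (fun x => -F x - N x * v x ^ 2) x := by
      filter_upwards [hFeven, hNeven, hveven] with x e1 e2 e3
      simp only [e1, e2, e3]
    have hheven : ∀ᵐ x : AddCircle (2 * Real.pi), h (-x) = h x := by
      filter_upwards [hcoe, aeNeg hcoe, hφeven] with x a b c
      rw [b, c, ← a]
    have hnε : ‖h‖ ≤ (1 - ‖T‖) * ε := by
      have hv2 : ‖v‖ ^ 2 ≤ ε ^ 2 := pow_le_pow_left₀ (norm_nonneg v) hvnorm 2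
      nlinarith
    constructor
    · obtain ⟨g, hg⟩ := hsolve h
      exact ⟨g, hg ▸ hcoe⟩
    · intro g hgφ
      have hgh : g - T g = h := Lp.ext (hgφ.trans hcoe.symm)
      refine ⟨heven g h hgh hheven, ?_⟩
      have := hbound g h hgh
      nlinarith
  · -- contraction constant
    rw [div_lt_one hD1]
    linarith [hεeq]
  · -- contraction estimate
    intro v w gv gw hveven hvnorm hweven hwnorm hv hw
    obtain ⟨hv', hvcoe, _⟩ := hmk v
    obtain ⟨hw', hwcoe, _⟩ := hmk w
    have h1eq : gv - T gv = hv' := Lp.ext (hv.trans hvcoe.symm)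
    have h2eq : gw - T gw = hw' := Lp.ext (hw.trans hwcoe.symm)
    have hd : (gv - gw) - T (gv - gw) = hv' - hw' := by
      have h3 : (gv - gw) - T (gv - gw) = (gv - T gv) - (gw - T gw) := by
        rw [map_sub]; abel
      rw [h3, h1eq, h2eq]
    have hdiff : ‖hv' - hw'‖ ≤ 2 * ‖N‖ * ε * ‖v - w‖ := by
      refine linf_norm_le _ (by positivity) ?_
      filter_upwards [Lp.coeFn_sub hv' hw', hvcoe, hwcoe, ae_bd N, ae_bd v, ae_bd w,
        ae_bd (v - w), Lp.coeFn_sub v w] with x e0 e1 e2 eN ev ew evw evw'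
      simp only [Pi.sub_apply] at e0 evw'
      rw [e0, e1, e2]
      rw [evw'] at evw
      rw [Real.norm_eq_abs] at eN ev ew evw ⊢
      have hx1 : (-F x - N x * v x ^ 2) - (-F x - N x * w x ^ 2)
          = N x * ((w x + v x) * (w x - v x)) := by ring
      rw [hx1, abs_mul, abs_mul]
      have h5 : |w x + v x| ≤ 2 * ε := by
        calc |w x + v x| ≤ |w x| + |v x| := abs_add_le _ _
          _ ≤ 2 * ε := by
              have hv' := ev.trans hvnorm
              have hw' := ew.trans hwnorm
              linarith
      have h6 : |w x - v x| ≤ ‖v - w‖ := by rw [abs_sub_comm]; exact evw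
      calc |N x| * (|w x + v x| * |w x - v x|) ≤ ‖N‖ * ((2 * ε) * ‖v - w‖) := by
            refine mul_le_mul eN ?_ (by positivity) (norm_nonneg N)
            exact mul_le_mul h5 h6 (abs_nonneg _) (by linarith)
        _ = 2 * ‖N‖ * ε * ‖v - w‖ := by ring
    have h7 := hbound _ _ hd
    rw [div_mul_eq_mul_div, le_div_iff₀ hD1]
    nlinarith
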